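/- arXiv:2008.13633 — 2 statements merged into one kernel-verified Lean document; each statement's English description precedes it below -/
import Mathlib

section
/- Fix ε ∈ (0, 1/3), a point x₀ ∈ ℝ^n, r > 0, a d-dimensional linear subspace T of ℝ^n, and let A = (T + B(0, εr)) ∩ B(x₀, (1−2ε)r) (where T is translated to pass through x₀). Define φ : ℝ^n → ℝ^n by φ(x) = x − η(dist(x, A)/r)·P⊥(x − x₀), where P⊥ is the orthogonal projection onto the orthogonal complement of T and η(t) = max(0, min(1, 1 − t/ε)). Then φ is Lipschitz with Lipschitz constant at most 4, φ(B(x₀, r)) ⊆ B(x₀, r), and φ(x) = x for x outside B(x₀, r). -/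
open MeasureTheory Filter Topology Set Metric Pointwise

/-- The orthogonal projection onto the orthogonal complement of `T`,
as a map `ℝⁿ → ℝⁿ`. -/
noncomputable def projPerp {n : ℕ} (T : Submodule ℝ (EuclideanSpace ℝ (Fin n))) :
    EuclideanSpace ℝ (Fin n) →L[ℝ] EuclideanSpace ℝ (Fin n) :=
  Tᗮ.subtypeL.comp (Submodule.orthogonalProjectionOnto Tᗮ)

lemma projPerp_norm_le {n : ℕ} (T : Submodule ℝ (EuclideanSpace ℝ (Fin n)))
    (z : EuclideanSpace ℝ (Fin n)) : ‖projPerp T z‖ ≤ ‖z‖ := by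
  have h1 : ‖projPerp T z‖ = ‖Submodule.orthogonalProjectionOnto Tᗮ z‖ := rfl
  rw [h1]
  calc ‖Submodule.orthogonalProjectionOnto Tᗮ z‖ ≤ ‖Submodule.orthogonalProjectionOnto Tᗮ‖ * ‖z‖ :=
        (Submodule.orthogonalProjectionOnto Tᗮ).le_opNorm z
    _ ≤ 1 * ‖z‖ := mul_le_mul_of_nonneg_right (Submodule.orthogonalProjectionOnto_norm_le _) (norm_nonneg _)
    _ = ‖z‖ := one_mul _

lemma projPerp_eq_zero_of_mem {n : ℕ} {T : Submodule ℝ (EuclideanSpace ℝ (Fin n))}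
    {t : EuclideanSpace ℝ (Fin n)} (ht : t ∈ T) : projPerp T t = 0 := by
  have : Submodule.orthogonalProjectionOnto Tᗮ t = 0 :=
    Submodule.orthogonalProjectionOnto_apply_of_mem_orthogonal
      (Submodule.le_orthogonal_orthogonal T ht)
  simp [projPerp, this]

lemma inner_projPerp {n : ℕ} (T : Submodule ℝ (EuclideanSpace ℝ (Fin n)))
    (z : EuclideanSpace ℝ (Fin n)) :
    inner ℝ z (projPerp T z) = (‖projPerp T z‖ : ℝ) ^ 2 := by
  have h1 : z - projPerp T z ∈ (Tᗮ)ᗮ := Submodule.sub_starProjection_mem_orthogonal (K := Tᗮ) z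
  have h2 : projPerp T z ∈ Tᗮ := (Submodule.orthogonalProjectionOnto Tᗮ z).2
  have h0 : (inner ℝ (z - projPerp T z) (projPerp T z) : ℝ) = 0 := by
    rw [real_inner_comm]
    exact Submodule.inner_right_of_mem_orthogonal h2 h1
  have := inner_sub_left (𝕜 := ℝ) z (projPerp T z) (projPerp T z)
  rw [h0] at this
  rw [← real_inner_self_eq_norm_sq]
  linarith [this]

theorem stmt3 (n d : ℕ) (ε r : ℝ) (hε : 0 < ε) (hε' : ε < 1 / 3) (hr : 0 < r)
    (x₀ : EuclideanSpace ℝ (Fin n))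
    (T : Submodule ℝ (EuclideanSpace ℝ (Fin n))) (hT : Module.finrank ℝ T = d)
    (A : Set (EuclideanSpace ℝ (Fin n)))
    (hA : A = ((fun y => x₀ + y) '' ((T : Set (EuclideanSpace ℝ (Fin n)))
        + closedBall 0 (ε * r))) ∩ closedBall x₀ ((1 - 2 * ε) * r))
    (η : ℝ → ℝ) (hη : ∀ t : ℝ, η t = max 0 (min 1 (1 - t / ε)))
    (φ : EuclideanSpace ℝ (Fin n) → EuclideanSpace ℝ (Fin n))
    (hφ : ∀ x, φ x = x - η (Metric.infDist x A / r) • projPerp T (x - x₀)) :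
    LipschitzWith 4 φ ∧ φ '' closedBall x₀ r ⊆ closedBall x₀ r ∧
      ∀ x ∉ closedBall x₀ r, φ x = x := by
  have hεr : 0 < ε * r := mul_pos hε hr
  -- η basic facts
  have hη0 : ∀ t, 0 ≤ η t := fun t => (hη t) ▸ le_max_left _ _
  have hη1 : ∀ t, η t ≤ 1 := fun t => (hη t) ▸ max_le zero_le_one (min_le_left _ _)
  have hηz : ∀ t, ε ≤ t → η t = 0 := by
    intro t ht
    rw [hη]
    have h1 : 1 ≤ t / ε := (one_le_div hε).mpr ht
    have : min 1 (1 - t / ε) ≤ 0 := le_trans (min_le_right _ _) (by linarith)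
    exact max_eq_left this
  have hηlip : ∀ s t, |η s - η t| ≤ |s - t| / ε := by
    intro s t
    rw [hη, hη]
    calc |max 0 (min 1 (1 - s / ε)) - max 0 (min 1 (1 - t / ε))|
        ≤ |min 1 (1 - s / ε) - min 1 (1 - t / ε)| := by
          rw [max_comm 0, max_comm 0]
          exact abs_max_sub_max_le_abs _ _ _
      _ ≤ max |(1:ℝ) - 1| |(1 - s / ε) - (1 - t / ε)| := abs_min_sub_min_le_max _ _ _ _
      _ = |s - t| / ε := by
          rw [sub_self, abs_zero]
          rw [max_eq_right (abs_nonneg _)]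
          rw [show (1 - s / ε) - (1 - t / ε) = (t - s) / ε by ring]
          rw [abs_div, abs_of_pos hε, abs_sub_comm]
  -- A is nonempty
  have hAne : A.Nonempty := by
    refine ⟨x₀, ?_⟩
    rw [hA]
    constructor
    · exact ⟨0, by simpa using Set.add_mem_add T.zero_mem (mem_closedBall_self hεr.le), by simp⟩
    · exact mem_closedBall_self (by nlinarith)
  -- key geometric bound
  have key : ∀ x : EuclideanSpace ℝ (Fin n), Metric.infDist x A < ε * r →
      ‖projPerp T (x - x₀)‖ ≤ 2 * (ε * r) := by
    intro x hx
    obtain ⟨a, haA, hxa⟩ := (Metric.infDist_lt_iff hAne).mp hx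
    rw [hA] at haA
    obtain ⟨⟨z, hz, rfl⟩, _⟩ := haA
    obtain ⟨t, ht, b, hb, rfl⟩ := Set.mem_add.mp hz
    have hbn : ‖b‖ ≤ ε * r := mem_closedBall_zero_iff.mp hb
    have hxan : ‖x - (x₀ + (t + b))‖ < ε * r := by rwa [← dist_eq_norm]
    have hsplit : x - x₀ = (x - (x₀ + (t + b))) + t + b := by abel
    rw [hsplit, map_add, map_add, projPerp_eq_zero_of_mem ht, add_zero]
    calc ‖projPerp T (x - (x₀ + (t + b))) + projPerp T b‖
        ≤ ‖projPerp T (x - (x₀ + (t + b)))‖ + ‖projPerp T b‖ := norm_add_le _ _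
      _ ≤ ‖x - (x₀ + (t + b))‖ + ‖b‖ := add_le_add (projPerp_norm_le _ _) (projPerp_norm_le _ _)
      _ ≤ 2 * (ε * r) := by linarith
  -- infDist Lipschitz
  have hdlip : ∀ x y : EuclideanSpace ℝ (Fin n),
      |Metric.infDist x A - Metric.infDist y A| ≤ dist x y := by
    intro x y
    rw [abs_sub_le_iff]
    constructor
    · linarith [Metric.infDist_le_infDist_add_dist (s := A) (x := x) (y := y)]
    · linarith [Metric.infDist_le_infDist_add_dist (s := A) (x := y) (y := x),
        dist_comm y x]
  -- main Lipschitz estimate when x is close to A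
  have main : ∀ x y : EuclideanSpace ℝ (Fin n), Metric.infDist x A < ε * r →
      dist (φ x) (φ y) ≤ 4 * dist x y := by
    intro x y hx
    set cx := η (Metric.infDist x A / r) with hcx
    set cy := η (Metric.infDist y A / r) with hcy
    set Px := projPerp T (x - x₀) with hPx
    set Py := projPerp T (y - x₀) with hPy
    have hid : φ x - φ y = (x - y) - (cx - cy) • Px - cy • (Px - Py) := by
      rw [hφ, hφ]
      module
    have hPxy : Px - Py = projPerp T (x - y) := by
      rw [hPx, hPy, ← map_sub]
      congr 1
      abel
    have hcd : |cx - cy| ≤ dist x y / (ε * r) := by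
      calc |cx - cy| ≤ |Metric.infDist x A / r - Metric.infDist y A / r| / ε := hηlip _ _
        _ = |Metric.infDist x A - Metric.infDist y A| / (ε * r) := by
            rw [div_sub_div_same, abs_div, abs_of_pos hr]
            rw [div_div]
            ring_nf
        _ ≤ dist x y / (ε * r) := by
            gcongr
            exact hdlip x y
    have hPxb : ‖Px‖ ≤ 2 * (ε * r) := key x hx
    have h1 : ‖(cx - cy) • Px‖ ≤ 2 * dist x y := by
      rw [norm_smul, Real.norm_eq_abs]
      calc |cx - cy| * ‖Px‖ ≤ (dist x y / (ε * r)) * (2 * (ε * r)) :=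
            mul_le_mul hcd hPxb (norm_nonneg _) (by positivity)
        _ = 2 * dist x y := by field_simp
    have h2 : ‖cy • (Px - Py)‖ ≤ dist x y := by
      rw [norm_smul, Real.norm_eq_abs, abs_of_nonneg (hη0 _), hPxy]
      calc cy * ‖projPerp T (x - y)‖ ≤ 1 * ‖x - y‖ :=
            mul_le_mul (hη1 _) (projPerp_norm_le _ _) (norm_nonneg _) zero_le_one
        _ = dist x y := by rw [one_mul, dist_eq_norm]
    have hdn : dist x y = ‖x - y‖ := dist_eq_norm x y
    rw [dist_eq_norm, hid]
    calc ‖(x - y) - (cx - cy) • Px - cy • (Px - Py)‖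
        ≤ ‖(x - y) - (cx - cy) • Px‖ + ‖cy • (Px - Py)‖ := norm_sub_le _ _
      _ ≤ ‖x - y‖ + ‖(cx - cy) • Px‖ + ‖cy • (Px - Py)‖ := by
          linarith [norm_sub_le (x - y) ((cx - cy) • Px)]
      _ ≤ dist x y + 2 * dist x y + dist x y := by linarith
      _ = 4 * dist x y := by ring
  constructor
  · -- Lipschitz
    apply LipschitzWith.of_dist_le_mul
    intro x y
    have h4 : ((4 : NNReal) : ℝ) = 4 := by norm_num
    rw [h4]
    by_cases hx : Metric.infDist x A < ε * r
    · exact main x y hx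
    · by_cases hy : Metric.infDist y A < ε * r
      · rw [dist_comm (φ x), dist_comm x]
        exact main y x hy
      · push_neg at hx hy
        have hcx : η (Metric.infDist x A / r) = 0 :=
          hηz _ ((le_div_iff₀ hr).mpr (by linarith))
        have hcy : η (Metric.infDist y A / r) = 0 :=
          hηz _ ((le_div_iff₀ hr).mpr (by linarith))
        rw [hφ, hφ, hcx, hcy]
        simp only [zero_smul, sub_zero]
        nlinarith [dist_nonneg (x := x) (y := y)]
  constructor
  · -- maps ball into ball
    rintro _ ⟨x, hx, rfl⟩
    set c := η (Metric.infDist x A / r) with hc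
    have hc0 : 0 ≤ c := hη0 _
    have hc1 : c ≤ 1 := hη1 _
    set z := x - x₀ with hz
    set P := projPerp T z with hP
    have hφx : φ x - x₀ = z - c • P := by rw [hφ x]; module
    have hinner : (inner ℝ z P : ℝ) = ‖P‖ ^ 2 := inner_projPerp T z
    have hexp : ‖z - c • P‖ ^ 2 = ‖z‖ ^ 2 - (2 * c - c ^ 2) * ‖P‖ ^ 2 := by
      rw [norm_sub_sq_real, real_inner_smul_right, hinner, norm_smul, Real.norm_eq_abs,
        abs_of_nonneg hc0, mul_pow]
      ring
    have hle : ‖z - c • P‖ ^ 2 ≤ ‖z‖ ^ 2 := by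
      nlinarith [sq_nonneg ‖P‖,
        mul_nonneg (mul_nonneg hc0 (by linarith : (0:ℝ) ≤ 2 - c)) (sq_nonneg ‖P‖)]
    have hnn : ‖z - c • P‖ ≤ ‖z‖ := by nlinarith [norm_nonneg (z - c • P), norm_nonneg z]
    rw [mem_closedBall, dist_eq_norm, hφx]
    calc ‖z - c • P‖ ≤ ‖z‖ := hnn
      _ ≤ r := by rw [hz, ← dist_eq_norm]; exact mem_closedBall.mp hx
  · -- identity outside the ball
    intro x hx
    rw [mem_closedBall, not_le] at hx
    have hfar : ε * r ≤ Metric.infDist x A := by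
      by_contra hcon
      push_neg at hcon
      obtain ⟨a, ha, hda⟩ := (Metric.infDist_lt_iff hAne).mp hcon
      rw [hA] at ha
      have ha2 : dist a x₀ ≤ (1 - 2 * ε) * r := mem_closedBall.mp ha.2
      have htri : dist x x₀ ≤ dist x a + dist a x₀ := dist_triangle x a x₀
      nlinarith
    have : η (Metric.infDist x A / r) = 0 := hηz _ ((le_div_iff₀ hr).mpr (by linarith))
    rw [hφ, this, zero_smul, sub_zero]
end

section
/- Let T and T_a be d-dimensional linear subspaces of ℝ^n, and let u₁, …, u_d be an orthonormal basis of T. Let p : ℝ^n → T_a be the orthogonal projection. Then the d-Jacobian of p restricted to T satisfies J_d(p|_T) = |p(u₁) ∧ ⋯ ∧ p(u_d)| ≤ (1 − ‖P_T − P_{T_a}‖²)^{1/2}, where P_T, P_{T_a} are the orthogonal projections onto T and T_a and ‖·‖ is the operator norm, provided u₁ is chosen to attain ‖P_T − P_{T_a}‖ = |P⊥_{T_a}(u₁)|. -/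
open Module Matrix

/-- The orthogonal projection onto `T`, as a continuous linear map `ℝⁿ → ℝⁿ`. -/
noncomputable def projCLM {n : ℕ} (T : Submodule ℝ (EuclideanSpace ℝ (Fin n))) :
    EuclideanSpace ℝ (Fin n) →L[ℝ] EuclideanSpace ℝ (Fin n) :=
  T.subtypeL.comp (Submodule.orthogonalProjection T)

/-- The norm `|w₁ ∧ ⋯ ∧ w_d|` of a wedge product, computed as the square root of the
Gram determinant. -/
noncomputable def wedgeNorm {n d : ℕ} (w : Fin d → EuclideanSpace ℝ (Fin n)) : ℝ :=
  Real.sqrt (Matrix.det (Matrix.of fun i j => (inner ℝ (w i) (w j) : ℝ)))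


lemma det_le_diag' {d : ℕ} (A : Matrix (Fin d) (Fin d) ℝ)
    (hA : A.PosSemidef) (h1 : (1 - A).PosSemidef) (i : Fin d) : A.det ≤ A i i := by
  have hH : A.IsHermitian := hA.1
  have h0 : ∀ j, 0 ≤ hH.eigenvalues j := hA.eigenvalues_nonneg
  have hle1 : ∀ j, hH.eigenvalues j ≤ 1 := by
    intro j
    set v : Fin d → ℝ := ⇑(hH.eigenvectorBasis j) with hv
    have hvv : dotProduct v v = 1 := by
      have hn : ‖hH.eigenvectorBasis j‖ = 1 := hH.eigenvectorBasis.orthonormal.1 j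
      have : (inner ℝ (hH.eigenvectorBasis j) (hH.eigenvectorBasis j) : ℝ) = 1 := by
        rw [real_inner_self_eq_norm_sq, hn]; norm_num
      simp only [dotProduct, v]
      rw [← this, PiLp.inner_apply]
      simp [RCLike.inner_apply, sq]
    have hnn := h1.dotProduct_mulVec_nonneg v
    rw [sub_mulVec, one_mulVec, hH.mulVec_eigenvectorBasis j, star_trivial,
      dotProduct_sub, dotProduct_smul, hvv, smul_eq_mul, mul_one] at hnn
    linarith
  have hdet : A.det = ∏ j, hH.eigenvalues j := by
    simpa using hH.det_eq_prod_eigenvalues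
  set U : Matrix (Fin d) (Fin d) ℝ := (hH.eigenvectorUnitary : Matrix (Fin d) (Fin d) ℝ) with hU
  have hdiag : A i i = ∑ k, (U i k)^2 * hH.eigenvalues k := by
    conv_lhs => rw [hH.spectral_theorem]
    simp [Matrix.mul_apply, Matrix.diagonal, Matrix.conjTranspose_apply, Finset.mul_sum,
      Finset.sum_mul]
    congr 1; ext k
    simp [Finset.sum_ite_eq, sq, hU]
    ring
  have hrow : ∑ k, (U i k)^2 = 1 := by
    have := (Matrix.mem_unitaryGroup_iff).mp hH.eigenvectorUnitary.2
    have h2 := congrFun (congrFun this i) i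
    simpa [Matrix.mul_apply, Matrix.one_apply, sq, Matrix.conjTranspose_apply, hU] using h2
  rw [hdet, hdiag]
  calc ∏ j, hH.eigenvalues j = ∑ k, (U i k)^2 * ∏ j, hH.eigenvalues j := by
        rw [← Finset.sum_mul, hrow, one_mul]
    _ ≤ ∑ k, (U i k)^2 * hH.eigenvalues k := by
        apply Finset.sum_le_sum
        intro k _
        apply mul_le_mul_of_nonneg_left _ (sq_nonneg _)
        calc ∏ j, hH.eigenvalues j
            = hH.eigenvalues k * ∏ j ∈ Finset.univ.erase k, hH.eigenvalues j :=
              (Finset.mul_prod_erase _ _ (Finset.mem_univ k)).symm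
          _ ≤ hH.eigenvalues k * 1 := by
              apply mul_le_mul_of_nonneg_left _ (h0 k)
              exact Finset.prod_le_one (fun j _ => h0 j) (fun j _ => hle1 j)
          _ = hH.eigenvalues k := mul_one _


lemma gram_posSemidef {n d : ℕ} (w : Fin d → EuclideanSpace ℝ (Fin n)) :
    (Matrix.of fun i j => (inner ℝ (w i) (w j) : ℝ)).PosSemidef := by
  have h : (Matrix.of fun i j => (inner ℝ (w i) (w j) : ℝ)) =
      (Matrix.of fun (k : Fin n) (i : Fin d) => w i k)ᴴ *
      (Matrix.of fun (k : Fin n) (i : Fin d) => w i k) := by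
    ext i j
    simp [Matrix.mul_apply, Matrix.conjTranspose_apply, PiLp.inner_apply, RCLike.inner_apply]
    exact Finset.sum_congr rfl fun _ _ => mul_comm _ _
  rw [h]
  exact Matrix.posSemidef_conjTranspose_mul_self _

theorem stmt5 (n d : ℕ) (hd : 0 < d)
    (T Ta : Submodule ℝ (EuclideanSpace ℝ (Fin n)))
    (hT : finrank ℝ T = d) (hTa : finrank ℝ Ta = d)
    (u : Fin d → EuclideanSpace ℝ (Fin n))
    (hu : Orthonormal ℝ u) (huT : ∀ i, u i ∈ T)
    (hspan : Submodule.span ℝ (Set.range u) = T)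
    (hattain : ‖projCLM T - projCLM Ta‖ = ‖projCLM Taᗮ (u ⟨0, hd⟩)‖) :
    wedgeNorm (fun i => projCLM Ta (u i)) ≤ Real.sqrt (1 - ‖projCLM T - projCLM Ta‖ ^ 2) := by
  set w : Fin d → EuclideanSpace ℝ (Fin n) := fun i => projCLM Ta (u i) with hw
  set q : Fin d → EuclideanSpace ℝ (Fin n) := fun i => projCLM Taᗮ (u i) with hq
  have hdecomp : ∀ i, w i + q i = u i := fun i =>
    Submodule.starProjection_add_starProjection_orthogonal (K := Ta) (u i)
  have hwmem : ∀ i, w i ∈ Ta := fun i => (Submodule.orthogonalProjection Ta (u i)).2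
  have hqmem : ∀ i, q i ∈ Taᗮ := fun i => (Submodule.orthogonalProjection Taᗮ (u i)).2
  have hcross : ∀ i j, (inner ℝ (w i) (q j) : ℝ) = 0 := fun i j =>
    Submodule.inner_right_of_mem_orthogonal (hwmem i) (hqmem j)
  set G : Matrix (Fin d) (Fin d) ℝ := Matrix.of fun i j => (inner ℝ (w i) (w j) : ℝ) with hG
  have hGps : G.PosSemidef := gram_posSemidef w
  have hsub : (1 : Matrix (Fin d) (Fin d) ℝ) - G =
      Matrix.of fun i j => (inner ℝ (q i) (q j) : ℝ) := by
    ext i j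
    have huij : (inner ℝ (u i) (u j) : ℝ) = if i = j then 1 else 0 :=
      orthonormal_iff_ite.mp hu i j
    have hexp : (inner ℝ (u i) (u j) : ℝ) =
        (inner ℝ (w i) (w j) : ℝ) + (inner ℝ (q i) (q j) : ℝ) := by
      conv_lhs => rw [← hdecomp i, ← hdecomp j]
      have hqw : (inner ℝ (q i) (w j) : ℝ) = 0 := by
        rw [real_inner_comm]; exact hcross j i
      rw [inner_add_left, inner_add_right, inner_add_right, hcross i j, hqw]
      ring
    simp only [Matrix.sub_apply, Matrix.one_apply, Matrix.of_apply, hG]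
    rw [← huij, hexp]
    ring
  set i0 : Fin d := ⟨0, hd⟩ with hi0
  have hdet : G.det ≤ G i0 i0 := by
    apply det_le_diag' G hGps _ i0
    rw [hsub]
    exact gram_posSemidef q
  have hG00 : G i0 i0 = ‖w i0‖ ^ 2 := by
    simp only [hG, Matrix.of_apply]
    rw [real_inner_self_eq_norm_sq]
  have hpyth : ‖w i0‖ ^ 2 + ‖q i0‖ ^ 2 = 1 := by
    have h1 : ‖u i0‖ = 1 := hu.1 i0
    have := norm_add_sq_real (w i0) (q i0)
    rw [hdecomp i0, hcross i0 i0, h1] at this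
    linarith [this]
  have hkey : G.det ≤ 1 - ‖projCLM T - projCLM Ta‖ ^ 2 := by
    rw [hattain]
    calc G.det ≤ G i0 i0 := hdet
      _ = ‖w i0‖ ^ 2 := hG00
      _ = 1 - ‖q i0‖ ^ 2 := by linarith
      _ = 1 - ‖projCLM Taᗮ (u ⟨0, hd⟩)‖ ^ 2 := by rw [hq]
  unfold wedgeNorm
  exact Real.sqrt_le_sqrt hkey
end
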